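/- If f : SG → ℝ is of bounded variation in the sense (A) and |f(x)| ≥ m > 0 for all x ∈ SG, then 1/f is also of bounded variation in sense (A); moreover Σ_{w∈{1,2,3}^n} R_{1/f}[u_w(SG)] ≤ 2V(f)/m² for all n, where V(f) is the total variation of f. -/

import Mathlib

open Set Metric MeasureTheory Filter ENNReal

noncomputable section

/-- The three vertices of the equilateral triangle generating the Sierpinski gasket. -/
def q : Fin 3 → ℝ × ℝ := ![(0,0), (1,0), (1/2, Real.sqrt 3 / 2)]

/-- The contraction maps of the IFS: `u i x = (x + q i)/2`. -/
def u (i : Fin 3) (x : ℝ × ℝ) : ℝ × ℝ := (2⁻¹ : ℝ) • (x + q i)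

/-- The address map of the IFS. -/
def addr (σ : ℕ → Fin 3) : ℝ × ℝ := ∑' n, ((2:ℝ)⁻¹ ^ (n+1)) • q (σ n)

/-- The Sierpinski gasket, as the set of points with an address. -/
def SG : Set (ℝ × ℝ) := Set.range addr

/-- Composition `u_{w₁} ∘ ⋯ ∘ u_{w_n}` along a word `w`. -/
def uw : List (Fin 3) → (ℝ × ℝ) → (ℝ × ℝ)
  | [] => id
  | i :: w => u i ∘ uw w

/-- The level-`n` cell of `SG` indexed by a word `w ∈ {1,2,3}^n`. -/
def cell {n : ℕ} (w : Fin n → Fin 3) : Set (ℝ × ℝ) := uw (List.ofFn w) '' SG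

/-- Oscillation (maximum range) `R_f[X]` of `f` over `X`, valued in `ℝ≥0∞`. -/
def osc (f : ℝ × ℝ → ℝ) (X : Set (ℝ × ℝ)) : ℝ≥0∞ :=
  ⨆ x ∈ X, ⨆ y ∈ X, ENNReal.ofReal |f x - f y|

/-- Total oscillation of order `n`: `R(n,f) = Σ_{w ∈ {1,2,3}^n} R_f[u_w(SG)]`. -/
def oscSum (n : ℕ) (f : ℝ × ℝ → ℝ) : ℝ≥0∞ :=
  ∑ w : Fin n → Fin 3, osc f (cell w)

/-- Total variation in the sense of definition (A). -/
def VA (f : ℝ × ℝ → ℝ) : ℝ≥0∞ := ⨆ n : ℕ, oscSum n f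

/-- Bounded variation in the sense of definition (A). -/
def BVA (f : ℝ × ℝ → ℝ) : Prop := VA f < ⊤

/-- `s = log 3 / log 2`, the dimension of `SG`. -/
def sdim : ℝ := Real.log 3 / Real.log 2

/-- Total oscillation of order `n` with exponent `s`. -/
def oscSumS (n : ℕ) (f : ℝ × ℝ → ℝ) : ℝ≥0∞ :=
  ∑ w : Fin n → Fin 3, (osc f (cell w)) ^ sdim

/-- Total variation in the sense of definition (A*). -/
def VAs (f : ℝ × ℝ → ℝ) : ℝ≥0∞ := ⨆ n : ℕ, oscSumS n f

/-- Bounded variation in the sense of definition (A*). -/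
def BVAs (f : ℝ × ℝ → ℝ) : Prop := VAs f < ⊤

/-- The graph `G_f = {(t, f t) : t ∈ SG} ⊂ ℝ³`. -/
def graphSG (f : ℝ × ℝ → ℝ) : Set ((ℝ × ℝ) × ℝ) := (fun t => (t, f t)) '' SG

/-- Smallest number of sets of diameter at most `δ` needed to cover `F`. -/
def coverNum {X : Type*} [MetricSpace X] (F : Set X) (δ : ℝ) : ℕ :=
  sInf {n : ℕ | ∃ t : Finset (Set X), t.card = n ∧ F ⊆ ⋃₀ ↑t ∧ ∀ U ∈ t, Metric.diam U ≤ δ}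

/-- Upper box (Minkowski) dimension. -/
def upperBoxDim {X : Type*} [MetricSpace X] (F : Set X) : ℝ :=
  Filter.limsup (fun δ : ℝ => Real.log (coverNum F δ) / (-Real.log δ)) (nhdsWithin 0 (Set.Ioi 0))

/-- Lower box dimension. -/
def lowerBoxDim {X : Type*} [MetricSpace X] (F : Set X) : ℝ :=
  Filter.liminf (fun δ : ℝ => Real.log (coverNum F δ) / (-Real.log δ)) (nhdsWithin 0 (Set.Ioi 0))

/-- The Euclidean norm on `ℝ × ℝ`. -/
def enorm2 (x : ℝ × ℝ) : ℝ := Real.sqrt (x.1 ^ 2 + x.2 ^ 2)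

lemma norm_q_le (i : Fin 3) : ‖q i‖ ≤ 2 := by
  have h3 : Real.sqrt 3 ≤ 2 := by
    rw [show (2:ℝ) = Real.sqrt 4 by rw [show (4:ℝ) = 2^2 by norm_num, Real.sqrt_sq]; norm_num]
    exact Real.sqrt_le_sqrt (by norm_num)
  have h0 : (0:ℝ) ≤ Real.sqrt 3 := Real.sqrt_nonneg 3
  fin_cases i <;>
    simp [q, Prod.norm_def, max_le_iff, abs_le, abs_of_nonneg, h0] <;>
    norm_num <;> linarith

lemma summable_addr (σ : ℕ → Fin 3) :
    Summable fun n => ((2:ℝ)⁻¹ ^ (n+1)) • q (σ n) := by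
  apply Summable.of_norm_bounded (g := fun n => (2:ℝ)⁻¹ ^ n)
    (summable_geometric_of_lt_one (by norm_num) (by norm_num))
  intro n
  rw [norm_smul]
  have h1 : ‖((2:ℝ)⁻¹ ^ (n+1))‖ = (2:ℝ)⁻¹ ^ (n+1) := by
    rw [Real.norm_eq_abs, abs_of_nonneg]; positivity
  rw [h1, pow_succ]
  calc (2:ℝ)⁻¹ ^ n * 2⁻¹ * ‖q (σ n)‖ ≤ (2:ℝ)⁻¹ ^ n * 2⁻¹ * 2 := by
        apply mul_le_mul_of_nonneg_left (norm_q_le _); positivity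
    _ = (2:ℝ)⁻¹ ^ n := by ring

lemma u_mem_SG (i : Fin 3) {x : ℝ × ℝ} (hx : x ∈ SG) : u i x ∈ SG := by
  obtain ⟨σ, rfl⟩ := hx
  refine ⟨fun n => Nat.casesOn n i σ, ?_⟩
  rw [addr, Summable.tsum_eq_zero_add (summable_addr _)]
  have h2 : ∀ n : ℕ, ((2:ℝ)⁻¹ ^ (n+1+1)) • q (σ n)
      = (2:ℝ)⁻¹ • (((2:ℝ)⁻¹ ^ (n+1)) • q (σ n)) := by
    intro n; rw [smul_smul, ← pow_succ']
  simp only [h2]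
  rw [Summable.tsum_const_smul _ (summable_addr σ)]
  simp only [u, addr]
  rw [smul_add]
  rw [add_comm]
  norm_num

lemma uw_mem_SG (w : List (Fin 3)) {x : ℝ × ℝ} (hx : x ∈ SG) : uw w x ∈ SG := by
  induction w with
  | nil => exact hx
  | cons i w ih => exact u_mem_SG i ih

lemma cell_subset_SG {n : ℕ} (w : Fin n → Fin 3) : cell w ⊆ SG := by
  rintro _ ⟨x, hx, rfl⟩
  exact uw_mem_SG _ hx

lemma inv_diff_bound {a b m : ℝ} (hm : 0 < m) (ha : m ≤ |a|) (hb : m ≤ |b|) :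
    |a⁻¹ - b⁻¹| * m ^ 2 ≤ |a - b| := by
  have ha0 : a ≠ 0 := by intro h; rw [h, abs_zero] at ha; linarith
  have hb0 : b ≠ 0 := by intro h; rw [h, abs_zero] at hb; linarith
  have key : a⁻¹ - b⁻¹ = (b - a) * (a * b)⁻¹ := by field_simp
  rw [key, abs_mul, abs_inv, abs_mul]
  have hab : m ^ 2 ≤ |a| * |b| := by
    calc m ^ 2 = m * m := sq m
      _ ≤ |a| * |b| := mul_le_mul ha hb hm.le (abs_nonneg a)
  have habpos : 0 < |a| * |b| := lt_of_lt_of_le (by positivity) hab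
  calc |b - a| * (|a| * |b|)⁻¹ * m ^ 2 ≤ |b - a| * (|a| * |b|)⁻¹ * (|a| * |b|) := by
        apply mul_le_mul_of_nonneg_left hab; positivity
    _ = |b - a| := by field_simp
    _ = |a - b| := abs_sub_comm b a

lemma osc_inv_le (f : ℝ × ℝ → ℝ) (m : ℝ) (hm : 0 < m)
    (X : Set (ℝ × ℝ)) (hX : X ⊆ SG) (hlb : ∀ x ∈ SG, m ≤ |f x|) :
    osc (fun x => (f x)⁻¹) X ≤ osc f X / ENNReal.ofReal (m ^ 2) := by
  rw [ENNReal.le_div_iff_mul_le (Or.inl (by simp [hm, pow_pos, hm.ne']))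
    (Or.inl ENNReal.ofReal_ne_top)]
  simp only [osc, ENNReal.iSup_mul]
  refine iSup₂_le fun x hx => iSup₂_le fun y hy => ?_
  calc ENNReal.ofReal |(f x)⁻¹ - (f y)⁻¹| * ENNReal.ofReal (m ^ 2)
      = ENNReal.ofReal (|(f x)⁻¹ - (f y)⁻¹| * m ^ 2) := by
        rw [ENNReal.ofReal_mul (abs_nonneg _)]
    _ ≤ ENNReal.ofReal |f x - f y| :=
        ENNReal.ofReal_le_ofReal (inv_diff_bound hm (hlb x (hX hx)) (hlb y (hX hy)))
    _ ≤ osc f X :=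
        le_trans (le_iSup₂ (f := fun y (_ : y ∈ X) => ENNReal.ofReal |f x - f y|) y hy)
          (le_iSup₂ (f := fun x (_ : x ∈ X) => ⨆ y ∈ X, ENNReal.ofReal |f x - f y|) x hx)

/-- if `f` is BV in sense (A) and `|f| ≥ m > 0` on `SG`, then `1/f` is BV in
sense (A), with `Σ_w R_{1/f}[u_w(SG)] ≤ 2V(f)/m²` for all `n`. -/
theorem stmt17 (f : ℝ × ℝ → ℝ) (m : ℝ) (hm : 0 < m)
    (hlb : ∀ x ∈ SG, m ≤ |f x|) (hbv : BVA f) :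
    BVA (fun x => (f x)⁻¹) ∧
    ∀ n : ℕ, oscSum n (fun x => (f x)⁻¹) ≤ 2 * VA f / ENNReal.ofReal (m ^ 2) := by
  have key : ∀ n : ℕ, oscSum n (fun x => (f x)⁻¹) ≤ 2 * VA f / ENNReal.ofReal (m ^ 2) := by
    intro n
    calc oscSum n (fun x => (f x)⁻¹)
        ≤ ∑ w : Fin n → Fin 3, osc f (cell w) / ENNReal.ofReal (m ^ 2) :=
          Finset.sum_le_sum fun w _ => osc_inv_le f m hm (cell w) (cell_subset_SG w) hlb
      _ = oscSum n f / ENNReal.ofReal (m ^ 2) := by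
          simp only [oscSum, div_eq_mul_inv, ← Finset.sum_mul]
      _ ≤ VA f / ENNReal.ofReal (m ^ 2) :=
          ENNReal.div_le_div_right (le_iSup (fun k => oscSum k f) n) _
      _ ≤ 2 * VA f / ENNReal.ofReal (m ^ 2) := by
          apply ENNReal.div_le_div_right
          calc VA f = 1 * VA f := (one_mul _).symm
            _ ≤ 2 * VA f := mul_le_mul_left (by norm_num) _
  refine ⟨?_, key⟩
  have hfin : 2 * VA f / ENNReal.ofReal (m ^ 2) < ⊤ := by
    apply ENNReal.div_lt_top
    · exact ENNReal.mul_ne_top (by norm_num) hbv.ne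
    · simp [ENNReal.ofReal_pos, pow_pos hm, hm.ne']
  exact lt_of_le_of_lt (iSup_le key) hfin
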